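/- If a kernel k on M satisfies k(hx, hy) = k(x, y) for all h in a group G acting on M and all x, y in M, then for the function F(h) = Σ_{i,j} c_{ij} k(x_i, h^{-1} z_j) with Z = X and c_{ij} = ⟨ℓ(x_i), ℓ(x_j)⟩ (a Gram matrix of an inner product), the identity element e is a global maximum of F over G, i.e., |F(h)| ≤ F(e) for all h ∈ G. -/
import Mathlib


open scoped RealInnerProductSpace

/-- If the kernel `k` is invariant under the group action and positive definite
(in the Gram-sum sense), then for `F h = ∑ i j, ⟪ℓ i, ℓ j⟫ * k (X i) (h⁻¹ • X j)`
the identity is a global maximum: `|F h| ≤ F 1`. -/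
theorem identity_is_global_max_of_invariant_kernel
    {G M I : Type*} [Group G] [MulAction G M]
    [NormedAddCommGroup I] [InnerProductSpace ℝ I]
    (k : M → M → ℝ)
    (hsymm : ∀ x y, k x y = k y x)
    (hinv : ∀ (h : G) (x y : M), k (h • x) (h • y) = k x y)
    (hpd : ∀ (m : ℕ) (y : Fin m → M) (a : Fin m → I),
      0 ≤ ∑ i, ∑ j, (⟪a i, a j⟫ : ℝ) * k (y i) (y j))
    (N : ℕ) (X : Fin N → M) (ℓ : Fin N → I)
    (F : G → ℝ)
    (hF : ∀ h : G, F h = ∑ i, ∑ j, (⟪ℓ i, ℓ j⟫ : ℝ) * k (X i) (h⁻¹ • X j)) :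
    ∀ h : G, |F h| ≤ F 1 := by
  intro h
  have hkinv : ∀ x y : M, k (h⁻¹ • x) (h⁻¹ • y) = k x y := by
    intro x y
    have := hinv h (h⁻¹ • x) (h⁻¹ • y)
    simpa [smul_inv_smul] using this.symm
  have key : ∀ c : ℝ, c * c = 1 → 0 ≤ F 1 + c * F h := by
    intro c hc
    have H := hpd (N + N) (Fin.append X (fun i => h⁻¹ • X i))
        (Fin.append ℓ (fun i => c • ℓ i))
    rw [Fin.sum_univ_add] at H
    simp only [Fin.sum_univ_add, Fin.append_left, Fin.append_right] at H
    rw [Finset.sum_add_distrib, Finset.sum_add_distrib] at H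
    have e1 : ∑ i, ∑ j, (⟪ℓ i, ℓ j⟫ : ℝ) * k (X i) (X j) = F 1 := by
      rw [hF 1]
      simp
    have e2 : ∑ i, ∑ j, (⟪ℓ i, c • ℓ j⟫ : ℝ) * k (X i) (h⁻¹ • X j) = c * F h := by
      rw [hF h, Finset.mul_sum]
      refine Finset.sum_congr rfl fun i _ => ?_
      rw [Finset.mul_sum]
      refine Finset.sum_congr rfl fun j _ => ?_
      rw [real_inner_smul_right]; ring
    have e3 : ∑ i, ∑ j, (⟪c • ℓ i, ℓ j⟫ : ℝ) * k (h⁻¹ • X i) (X j) = c * F h := by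
      rw [Finset.sum_comm, hF h, Finset.mul_sum]
      refine Finset.sum_congr rfl fun i _ => ?_
      rw [Finset.mul_sum]
      refine Finset.sum_congr rfl fun j _ => ?_
      rw [real_inner_smul_left, real_inner_comm, hsymm]; ring
    have e4 : ∑ i, ∑ j, (⟪c • ℓ i, c • ℓ j⟫ : ℝ) * k (h⁻¹ • X i) (h⁻¹ • X j) = F 1 := by
      rw [hF 1]
      refine Finset.sum_congr rfl fun i _ => ?_
      refine Finset.sum_congr rfl fun j _ => ?_
      rw [real_inner_smul_left, real_inner_smul_right, hkinv]
      simp only [inv_one, one_smul]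
      linear_combination (⟪ℓ i, ℓ j⟫ : ℝ) * k (X i) (X j) * hc
    rw [e1, e2, e3, e4] at H
    linarith
  have k1 := key 1 (by norm_num)
  have k2 := key (-1) (by norm_num)
  rw [abs_le]
  constructor <;> linarith
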